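/- Let μ be a positive Borel measure on ℝ and let f be a nonnegative μ-measurable function on ℝ such that μ({x : f(x) > t}) < ∞ for every t > 0. Then for every λ > 0, μ({x ∈ ℝ : M_μ f(x) > λ}) ≤ Leb({x ∈ ℝ : M(f*)(x) > λ}), where Leb denotes Lebesgue measure on ℝ. -/

import Mathlib

open MeasureTheory Set ENNReal

/-- Symmetric decreasing rearrangement (w.r.t. the measure `μ`) of an
`ℝ≥0∞`-valued function `g` on `ℝ`:  `g*(x) = inf {t > 0 | μ {g > t} ≤ 2|x|}`. -/
noncomputable def rearrE (μ : Measure ℝ) (g : ℝ → ℝ≥0∞) (x : ℝ) : ℝ≥0∞ :=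
  sInf {t : ℝ≥0∞ | 0 < t ∧ μ {y | t < g y} ≤ ENNReal.ofReal (2 * |x|)}

/-- Symmetric decreasing rearrangement (w.r.t. `μ`) of a real-valued function:
`f*(x) = inf {t > 0 | μ {|f| > t} ≤ 2|x|}`. -/
noncomputable def rearr (μ : Measure ℝ) (f : ℝ → ℝ) (x : ℝ) : ℝ≥0∞ :=
  rearrE μ (fun y => ENNReal.ofReal |f y|) x

/-- Uncentered Hardy-Littlewood maximal function w.r.t. `μ` of an
`ℝ≥0∞`-valued function: the sup of averages over open intervals containing `x`
of positive `μ`-measure. -/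
noncomputable def maximalE (μ : Measure ℝ) (g : ℝ → ℝ≥0∞) (x : ℝ) : ℝ≥0∞ :=
  ⨆ (a : ℝ) (b : ℝ) (_ : x ∈ Ioo a b) (_ : 0 < μ (Ioo a b)),
    (μ (Ioo a b))⁻¹ * ∫⁻ y in Ioo a b, g y ∂μ

/-- Uncentered Hardy-Littlewood maximal function `M_μ f` of a real-valued `f`. -/
noncomputable def maximal (μ : Measure ℝ) (f : ℝ → ℝ) (x : ℝ) : ℝ≥0∞ :=
  maximalE μ (fun y => ENNReal.ofReal |f y|) x

/-- Weak `L^p` quasinorm w.r.t. `μ` of an `ℝ≥0∞`-valued function: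
`sup_{t>0} t · μ({g > t})^(1/p)`. -/
noncomputable def wnormE (μ : Measure ℝ) (g : ℝ → ℝ≥0∞) (p : ℝ) : ℝ≥0∞ :=
  ⨆ (t : ℝ) (_ : 0 < t), ENNReal.ofReal t * μ {x | ENNReal.ofReal t < g x} ^ (1 / p)

/-- Weak `L^p` quasinorm `‖f‖_{L^{p,∞}(ℝ,dμ)} = sup_{t>0} t · μ({|f| > t})^(1/p)`. -/
noncomputable def wnorm' (μ : Measure ℝ) (f : ℝ → ℝ) (p : ℝ) : ℝ≥0∞ :=
  wnormE μ (fun x => ENNReal.ofReal |f x|) p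

/-- `f` is distributionally symmetric: for every `t > 0` the sets
`{x > 0 | f x > t}` and `{x < 0 | f x > t}` have the same Lebesgue measure. -/
def DistribSymm (f : ℝ → ℝ) : Prop :=
  ∀ t : ℝ, 0 < t → volume {x | 0 < x ∧ t < f x} = volume {x | x < 0 ∧ t < f x}


section AuxStmt1
open scoped Classical
lemma rearr_neg (μ : Measure ℝ) (f : ℝ → ℝ) (x : ℝ) : rearr μ f (-x) = rearr μ f x := by
  simp [rearr, rearrE, abs_neg]

/-- helper: the sInf as a function of the bound `u`. -/
noncomputable def rearrAux (μ : Measure ℝ) (g : ℝ → ℝ≥0∞) (u : ℝ) : ℝ≥0∞ :=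
  sInf {t : ℝ≥0∞ | 0 < t ∧ μ {y | t < g y} ≤ ENNReal.ofReal u}

lemma rearrAux_antitone (μ : Measure ℝ) (g : ℝ → ℝ≥0∞) : Antitone (rearrAux μ g) := by
  intro u v huv
  apply sInf_le_sInf
  intro t ht
  exact ⟨ht.1, ht.2.trans (ENNReal.ofReal_le_ofReal huv)⟩

lemma rearr_eq_aux (μ : Measure ℝ) (f : ℝ → ℝ) (x : ℝ) :
    rearr μ f x = rearrAux μ (fun y => ENNReal.ofReal |f y|) (2 * |x|) := rfl

lemma measurable_rearr (μ : Measure ℝ) (f : ℝ → ℝ) : Measurable (rearr μ f) := by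
  have h1 : Measurable (rearrAux μ (fun y => ENNReal.ofReal |f y|)) :=
    (rearrAux_antitone μ _).measurable
  have h2 : Measurable (fun x : ℝ => 2 * |x|) := by measurability
  exact h1.comp h2

/-- mini layer-cake for `ℝ≥0∞`-valued functions. -/
lemma lintegral_layer (ν : Measure ℝ) [SigmaFinite ν] (g : ℝ → ℝ≥0∞) (hg : Measurable g) :
    ∫⁻ x, g x ∂ν = ∫⁻ t in Ioi (0:ℝ), ν {x | ENNReal.ofReal t < g x} := by
  have key : ∀ c : ℝ≥0∞, ∫⁻ t in Ioi (0:ℝ), {t : ℝ | ENNReal.ofReal t < c}.indicator (fun _ => (1:ℝ≥0∞)) t = c := by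
    intro c
    rw [lintegral_indicator]
    · rw [setLIntegral_one, Measure.restrict_apply]
      · rcases eq_or_ne c ⊤ with rfl | hc
        · have : {t : ℝ | ENNReal.ofReal t < ⊤} = univ := by
            ext t; simp [ofReal_lt_top]
          simp [this]
        · have : {t : ℝ | ENNReal.ofReal t < c} ∩ Ioi 0 = Ioo 0 c.toReal := by
            ext t
            simp only [mem_inter_iff, mem_setOf_eq, mem_Ioi, mem_Ioo]
            constructor
            · rintro ⟨h1, h2⟩
              exact ⟨h2, (ENNReal.ofReal_lt_iff_lt_toReal h2.le hc).mp h1⟩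
            · rintro ⟨h1, h2⟩
              exact ⟨(ENNReal.ofReal_lt_iff_lt_toReal h1.le hc).mpr h2, h1⟩
          rw [this, Real.volume_Ioo, sub_zero, ENNReal.ofReal_toReal hc]
      · exact ENNReal.measurable_ofReal measurableSet_Iio
    · exact ENNReal.measurable_ofReal measurableSet_Iio
  have swap : ∫⁻ x, (∫⁻ t in Ioi (0:ℝ), {t : ℝ | ENNReal.ofReal t < g x}.indicator (fun _ => (1:ℝ≥0∞)) t) ∂ν
      = ∫⁻ t in Ioi (0:ℝ), (∫⁻ x, {t : ℝ | ENNReal.ofReal t < g x}.indicator (fun _ => (1:ℝ≥0∞)) t ∂ν) := by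
    refine lintegral_lintegral_swap (μ := ν) (ν := volume.restrict (Ioi (0:ℝ))) ?_
    apply Measurable.aemeasurable
    have hm : Measurable fun p : ℝ × ℝ => if ENNReal.ofReal p.2 < g p.1 then (1:ℝ≥0∞) else 0 := by
      apply Measurable.ite _ measurable_const measurable_const
      exact measurableSet_lt (ENNReal.measurable_ofReal.comp measurable_snd) (hg.comp measurable_fst)
    have : (Function.uncurry fun x t => {t : ℝ | ENNReal.ofReal t < g x}.indicator (fun _ => (1:ℝ≥0∞)) t)
        = fun p : ℝ × ℝ => if ENNReal.ofReal p.2 < g p.1 then (1:ℝ≥0∞) else 0 := by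
      ext p
      simp [Function.uncurry, Set.indicator_apply, mem_setOf_eq]
    rw [this]; exact hm
  calc ∫⁻ x, g x ∂ν
      = ∫⁻ x, (∫⁻ t in Ioi (0:ℝ), {t : ℝ | ENNReal.ofReal t < g x}.indicator (fun _ => (1:ℝ≥0∞)) t) ∂ν := by
        apply lintegral_congr; intro x; exact (key (g x)).symm
    _ = ∫⁻ t in Ioi (0:ℝ), (∫⁻ x, {t : ℝ | ENNReal.ofReal t < g x}.indicator (fun _ => (1:ℝ≥0∞)) t ∂ν) := swap
    _ = ∫⁻ t in Ioi (0:ℝ), ν {x | ENNReal.ofReal t < g x} := by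
        apply lintegral_congr; intro t
        have : ∀ x, {t : ℝ | ENNReal.ofReal t < g x}.indicator (fun _ => (1:ℝ≥0∞)) t
            = {x | ENNReal.ofReal t < g x}.indicator (fun _ => (1:ℝ≥0∞)) x := by
          intro x; simp [Set.indicator_apply, mem_setOf_eq]
        rw [lintegral_congr this, lintegral_indicator, setLIntegral_one]
        exact hg measurableSet_Ioi

section
variable (μ : Measure ℝ) (f : ℝ → ℝ)

/-- continuity from below of the distribution function. -/
lemma distrib_sup (t : ℝ) :
    μ {y | t < f y} = ⨆ n : ℕ, μ {y | t + 1/(n+1) < f y} := by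
  have hU : {y | t < f y} = ⋃ n : ℕ, {y | t + 1/((n:ℝ)+1) < f y} := by
    ext y
    simp only [mem_setOf_eq, mem_iUnion]
    constructor
    · intro h
      obtain ⟨n, hn⟩ := exists_nat_one_div_lt (sub_pos.mpr h)
      exact ⟨n, by linarith⟩
    · rintro ⟨n, hn⟩
      have : (0:ℝ) < 1/((n:ℝ)+1) := by positivity
      linarith
  rw [hU]
  apply Directed.measure_iUnion
  intro n m
  rcases le_total n m with h | h
  · refine ⟨m, fun y hy => ?_, fun y hy => hy⟩
    simp only [mem_setOf_eq] at *
    have : 1/((m:ℝ)+1) ≤ 1/((n:ℝ)+1) := by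
      apply one_div_le_one_div_of_le (by positivity)
      have := (Nat.cast_le (α := ℝ)).mpr h; linarith
    linarith
  · refine ⟨n, fun y hy => hy, fun y hy => ?_⟩
    simp only [mem_setOf_eq] at *
    have : 1/((n:ℝ)+1) ≤ 1/((m:ℝ)+1) := by
      apply one_div_le_one_div_of_le (by positivity)
      have := (Nat.cast_le (α := ℝ)).mpr h; linarith
    linarith

/-- If `2|x| < μ{f > t}` then `f*(x) > t`. -/
lemma rearr_level (hf0 : ∀ x, 0 ≤ f x) {t : ℝ} (ht : 0 < t) {x : ℝ}
    (hx : ENNReal.ofReal (2 * |x|) < μ {y | t < f y}) :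
    ENNReal.ofReal t < rearr μ f x := by
  rw [distrib_sup μ f t, lt_iSup_iff] at hx
  obtain ⟨n, hn⟩ := hx
  set ε : ℝ := 1/((n:ℝ)+1) with hε
  have hε0 : 0 < ε := by positivity
  have hle : ENNReal.ofReal (t + ε) ≤ rearr μ f x := by
    apply le_sInf
    rintro s ⟨hs0, hs⟩
    by_contra hlt
    push_neg at hlt
    have hsub : {y | t + ε < f y} ⊆ {y | s < ENNReal.ofReal |f y|} := by
      intro y hy
      simp only [mem_setOf_eq] at *
      calc s < ENNReal.ofReal (t + ε) := hlt
        _ ≤ ENNReal.ofReal |f y| := by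
            apply ENNReal.ofReal_le_ofReal
            rw [abs_of_nonneg (hf0 y)]; linarith
    exact absurd hs (not_le.mpr (hn.trans_le (measure_mono hsub)))
  calc ENNReal.ofReal t < ENNReal.ofReal (t + ε) := by
        rw [ENNReal.ofReal_lt_ofReal_iff_of_nonneg ht.le]; linarith
    _ ≤ rearr μ f x := hle

end

/-- Hardy–Littlewood inequality: integral over a set `A` is at most the integral
of the rearrangement over a symmetric interval of the same measure. -/
lemma hl_ineq (μ : Measure ℝ) (f : ℝ → ℝ) (hf : Measurable f) (hf0 : ∀ x, 0 ≤ f x)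
    (hfin : ∀ t : ℝ, 0 < t → μ {x | t < f x} < ⊤)
    (A : Set ℝ) (hAfin : μ A ≠ ⊤) :
    ∫⁻ y in A, ENNReal.ofReal (f y) ∂μ ≤
      ∫⁻ x in Ioo (-((μ A).toReal/2)) ((μ A).toReal/2), rearr μ f x := by
  have hL : ∫⁻ y in A, ENNReal.ofReal (f y) ∂μ
      = ∫⁻ t in Ioi (0:ℝ), (μ.restrict A) {a | t < f a} :=
    lintegral_eq_lintegral_meas_lt (μ.restrict A) (ae_of_all _ hf0) hf.aemeasurable
  have hR : ∫⁻ x in Ioo (-((μ A).toReal/2)) ((μ A).toReal/2), rearr μ f x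
      = ∫⁻ t in Ioi (0:ℝ),
          (volume.restrict (Ioo (-((μ A).toReal/2)) ((μ A).toReal/2))) {x | ENNReal.ofReal t < rearr μ f x} :=
    lintegral_layer _ _ (measurable_rearr μ f)
  rw [hL, hR]
  apply lintegral_mono_ae
  filter_upwards [ae_restrict_mem measurableSet_Ioi] with t ht
  simp only [mem_Ioi] at ht
  set r : ℝ := (μ A).toReal/2 with hr
  set d : ℝ := (μ {y | t < f y}).toReal/2 with hd
  set m : ℝ := min r d with hm
  have hr0 : 0 ≤ r := by positivity
  have hd0 : 0 ≤ d := by positivity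
  have hdfin : μ {y | t < f y} ≠ ⊤ := (hfin t ht).ne
  have step1 : (μ.restrict A) {a | t < f a} ≤ min (μ A) (μ {y | t < f y}) := by
    rw [Measure.restrict_apply (measurableSet_lt measurable_const hf)]
    exact le_min (measure_mono inter_subset_right) (measure_mono inter_subset_left)
  have step2 : min (μ A) (μ {y | t < f y}) ≤ volume (Ioo (-m) m) := by
    rw [Real.volume_Ioo]
    rcases le_total r d with h | h
    · have : m = r := min_eq_left h
      rw [this]
      have : ENNReal.ofReal (r - -r) = μ A := by
        rw [show r - -r = (μ A).toReal by rw [hr]; ring, ENNReal.ofReal_toReal hAfin]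
      rw [this]; exact min_le_left _ _
    · have : m = d := min_eq_right h
      rw [this]
      have : ENNReal.ofReal (d - -d) = μ {y | t < f y} := by
        rw [show d - -d = (μ {y | t < f y}).toReal by rw [hd]; ring, ENNReal.ofReal_toReal hdfin]
      rw [this]; exact min_le_right _ _
  have step3 : volume (Ioo (-m) m)
      ≤ (volume.restrict (Ioo (-r) r)) {x | ENNReal.ofReal t < rearr μ f x} := by
    rw [Measure.restrict_apply (measurableSet_lt measurable_const (measurable_rearr μ f))]
    apply measure_mono
    intro x hx
    simp only [mem_Ioo] at hx
    have habs : |x| < m := abs_lt.mpr ⟨hx.1, hx.2⟩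
    have hxd : |x| < d := habs.trans_le (min_le_right _ _)
    have hxr : |x| < r := habs.trans_le (min_le_left _ _)
    constructor
    · apply rearr_level μ f hf0 ht
      rw [ENNReal.ofReal_lt_iff_lt_toReal (by positivity) hdfin]
      rw [hd] at hxd; linarith
    · exact mem_Ioo.mpr (abs_lt.mp hxr)
  exact step1.trans (step2.trans step3)


lemma mid_subset {ai bi aj bj ar br x : ℝ} (hi : x ∈ Ioo ai bi) (hj : x ∈ Ioo aj bj)
    (hle : ai ≤ ar) (hge : br ≤ bj) : Ioo ar br ⊆ Ioo ai bi ∪ Ioo aj bj := by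
  intro y hy
  rcases lt_or_ge y bi with h | h
  · exact Or.inl ⟨lt_of_le_of_lt hle hy.1, h⟩
  · exact Or.inr ⟨hj.1.trans (hi.2.trans_le h), hy.2.trans_le hge⟩

lemma three_redundant {ak bk al bl am bm : ℝ} {x : ℝ}
    (hk : x ∈ Ioo ak bk) (hl : x ∈ Ioo al bl) (hm : x ∈ Ioo am bm) :
    (Ioo ak bk ⊆ Ioo al bl ∪ Ioo am bm) ∨
    (Ioo al bl ⊆ Ioo ak bk ∪ Ioo am bm) ∨
    (Ioo am bm ⊆ Ioo ak bk ∪ Ioo al bl) := by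
  rcases le_total ak al with h1 | h1
  · rcases le_total ak am with h2 | h2
    · rcases le_total bl bm with h3 | h3
      · exact Or.inr (Or.inl (mid_subset hk hm h1 h3))
      · exact Or.inr (Or.inr (mid_subset hk hl h2 h3))
    · rcases le_total bk bl with h3 | h3
      · exact Or.inl (by rw [Set.union_comm]; exact mid_subset hm hl h2 h3)
      · exact Or.inr (Or.inl (by rw [Set.union_comm]; exact mid_subset hm hk (h2.trans h1) h3))
  · rcases le_total al am with h2 | h2
    · rcases le_total bk bm with h3 | h3
      · exact Or.inl (mid_subset hl hm h1 h3)
      · exact Or.inr (Or.inr (by rw [Set.union_comm]; exact mid_subset hl hk h2 h3))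
    · rcases le_total bk bl with h3 | h3
      · exact Or.inl (by rw [Set.union_comm]; exact mid_subset hm hl (h2.trans h1) h3)
      · exact Or.inr (Or.inl (by rw [Set.union_comm]; exact mid_subset hm hk h2 h3))

lemma selection (a b : ℕ → ℝ) (s : Finset ℕ) :
    ∃ t ⊆ s, (⋃ k ∈ t, Ioo (a k) (b k)) = (⋃ k ∈ s, Ioo (a k) (b k)) ∧
      ∀ x : ℝ, (t.filter (fun k => x ∈ Ioo (a k) (b k))).card ≤ 2 := by
  induction s using Finset.strongInductionOn with
  | _ s ih =>
    by_cases h : ∀ x : ℝ, (s.filter (fun k => x ∈ Ioo (a k) (b k))).card ≤ 2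
    · exact ⟨s, Finset.Subset.refl s, rfl, h⟩
    · push_neg at h
      obtain ⟨x, hx⟩ := h
      rw [Finset.two_lt_card_iff] at hx
      obtain ⟨k, l, m, hk, hl, hm, hkl, hkm, hlm⟩ := hx
      rw [Finset.mem_filter] at hk hl hm
      -- find a redundant index r with its interval inside the union of the other two,
      -- and such that erasing r keeps the union unchanged
      have key : ∃ r ∈ s, (Ioo (a r) (b r) ⊆ ⋃ k ∈ s.erase r, Ioo (a k) (b k)) := by
        rcases three_redundant hk.2 hl.2 hm.2 with hsub | hsub | hsub
        · refine ⟨k, hk.1, hsub.trans ?_⟩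
          apply Set.union_subset
          · intro y hy; exact Set.mem_biUnion (Finset.mem_erase.mpr ⟨hkl.symm, hl.1⟩) hy
          · intro y hy; exact Set.mem_biUnion (Finset.mem_erase.mpr ⟨hkm.symm, hm.1⟩) hy
        · refine ⟨l, hl.1, hsub.trans ?_⟩
          apply Set.union_subset
          · intro y hy; exact Set.mem_biUnion (Finset.mem_erase.mpr ⟨hkl, hk.1⟩) hy
          · intro y hy; exact Set.mem_biUnion (Finset.mem_erase.mpr ⟨hlm.symm, hm.1⟩) hy
        · refine ⟨m, hm.1, hsub.trans ?_⟩
          apply Set.union_subset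
          · intro y hy; exact Set.mem_biUnion (Finset.mem_erase.mpr ⟨hkm, hk.1⟩) hy
          · intro y hy; exact Set.mem_biUnion (Finset.mem_erase.mpr ⟨hlm, hl.1⟩) hy
      obtain ⟨r, hr, hrsub⟩ := key
      have herase : (⋃ k ∈ s.erase r, Ioo (a k) (b k)) = (⋃ k ∈ s, Ioo (a k) (b k)) := by
        apply Set.Subset.antisymm
        · exact Set.biUnion_subset_biUnion_left (fun j hj => (Finset.mem_erase.mp hj).2)
        · intro y hy
          rw [Set.mem_iUnion₂] at hy ⊢
          obtain ⟨j, hj, hyj⟩ := hy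
          by_cases hjr : j = r
          · subst hjr
            have := hrsub hyj
            rwa [Set.mem_iUnion₂] at this
          · exact ⟨j, Finset.mem_erase.mpr ⟨hjr, hj⟩, hyj⟩
      obtain ⟨t, ht, hun, hcard⟩ := ih (s.erase r) (Finset.erase_ssubset hr)
      exact ⟨t, ht.trans (Finset.erase_subset r s), hun.trans herase, hcard⟩


/-- T2: points covered at least twice. -/
def twoSet (a b : ℕ → ℝ) (t : Finset ℕ) : Set ℝ :=
  {x | 2 ≤ (t.filter (fun k => x ∈ Ioo (a k) (b k))).card}

lemma twoSet_eq (a b : ℕ → ℝ) (t : Finset ℕ) :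
    twoSet a b t = ⋃ k ∈ t, ⋃ l ∈ t.erase k, (Ioo (a k) (b k) ∩ Ioo (a l) (b l)) := by
  ext x
  simp only [twoSet, mem_setOf_eq, Set.mem_iUnion, Set.mem_inter_iff, exists_prop]
  constructor
  · intro h
    have h1 : 1 < (t.filter (fun k => x ∈ Ioo (a k) (b k))).card := h
    rw [Finset.one_lt_card] at h1
    obtain ⟨k, hk, l, hl, hkl⟩ := h1
    rw [Finset.mem_filter] at hk hl
    exact ⟨k, hk.1, l, Finset.mem_erase.mpr ⟨hkl.symm, hl.1⟩, hk.2, hl.2⟩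
  · rintro ⟨k, hk, l, hl, hxk, hxl⟩
    rw [Finset.mem_erase] at hl
    have : {k, l} ⊆ t.filter (fun k => x ∈ Ioo (a k) (b k)) := by
      intro j hj
      rcases Finset.mem_insert.mp hj with rfl | hj
      · exact Finset.mem_filter.mpr ⟨hk, hxk⟩
      · rw [Finset.mem_singleton] at hj; subst hj
        exact Finset.mem_filter.mpr ⟨hl.2, hxl⟩
    calc 2 = ({k, l} : Finset ℕ).card := (Finset.card_pair (Ne.symm hl.1)).symm
      _ ≤ _ := Finset.card_le_card this

lemma twoSet_measurable (a b : ℕ → ℝ) (t : Finset ℕ) : MeasurableSet (twoSet a b t) := by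
  rw [twoSet_eq]
  exact t.measurableSet_biUnion (fun k _ =>
    (t.erase k).measurableSet_biUnion (fun l _ => measurableSet_Ioo.inter measurableSet_Ioo))

lemma twoSet_subset (a b : ℕ → ℝ) (t : Finset ℕ) :
    twoSet a b t ⊆ ⋃ k ∈ t, Ioo (a k) (b k) := by
  rw [twoSet_eq]
  intro x hx
  simp only [Set.mem_iUnion, exists_prop] at hx ⊢
  obtain ⟨k, hk, l, hl, hxk, hxl⟩ := hx
  exact ⟨k, hk, hxk⟩

/-- indicator sum identity for a multiplicity ≤ 2 family. -/
lemma sum_split (μ : Measure ℝ) (h : ℝ → ℝ≥0∞) (hh : Measurable h)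
    (a b : ℕ → ℝ) (t : Finset ℕ)
    (hmult : ∀ x : ℝ, (t.filter (fun k => x ∈ Ioo (a k) (b k))).card ≤ 2) :
    ∑ k ∈ t, ∫⁻ y in Ioo (a k) (b k), h y ∂μ
      = (∫⁻ y in (⋃ k ∈ t, Ioo (a k) (b k)), h y ∂μ) + ∫⁻ y in twoSet a b t, h y ∂μ := by
  have hmeas1 : MeasurableSet (⋃ k ∈ t, Ioo (a k) (b k)) :=
    t.measurableSet_biUnion (fun k _ => measurableSet_Ioo)
  have hmeas2 := twoSet_measurable a b t
  have step : ∀ k ∈ t, ∫⁻ y in Ioo (a k) (b k), h y ∂μ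
      = ∫⁻ y, (Ioo (a k) (b k)).indicator h y ∂μ := by
    intro k _
    rw [lintegral_indicator measurableSet_Ioo]
  rw [Finset.sum_congr rfl step, ← lintegral_finset_sum _ (fun k _ => hh.indicator measurableSet_Ioo),
    ← lintegral_indicator hmeas1, ← lintegral_indicator hmeas2,
    ← lintegral_add_left (hh.indicator hmeas1)]
  apply lintegral_congr
  intro y
  have key : ∑ k ∈ t, (Ioo (a k) (b k)).indicator h y
      = ((t.filter (fun k => y ∈ Ioo (a k) (b k))).card : ℝ≥0∞) * h y := by
    rw [Finset.sum_indicator_eq_sum_filter]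
    simp [Finset.sum_const, nsmul_eq_mul]
  rw [key]
  set c := (t.filter (fun k => y ∈ Ioo (a k) (b k))).card with hc
  have hc2 : c ≤ 2 := hmult y
  have hmem1 : y ∈ (⋃ k ∈ t, Ioo (a k) (b k)) ↔ 1 ≤ c := by
    simp only [Set.mem_iUnion, exists_prop, hc, Finset.one_le_card]
    constructor
    · rintro ⟨k, hk, hyk⟩; exact ⟨k, Finset.mem_filter.mpr ⟨hk, hyk⟩⟩
    · rintro ⟨k, hk⟩; rw [Finset.mem_filter] at hk; exact ⟨k, hk.1, hk.2⟩
  have hmem2 : y ∈ twoSet a b t ↔ 2 ≤ c := Iff.rfl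
  interval_cases c
  · rw [Set.indicator_of_notMem (by rw [hmem1]; omega), Set.indicator_of_notMem (by rw [hmem2]; omega)]
    simp
  · rw [Set.indicator_of_mem (hmem1.mpr (by omega)), Set.indicator_of_notMem (by rw [hmem2]; omega)]
    simp
  · rw [Set.indicator_of_mem (hmem1.mpr (by omega)), Set.indicator_of_mem (hmem2.mpr (by omega))]
    rw [show ((2:ℕ):ℝ≥0∞) = 2 by norm_num, two_mul]

lemma lint_reflect (μ : Measure ℝ) (f : ℝ → ℝ) (r : ℝ) :
    ∫⁻ x in Ioo (-r) 0, rearr μ f x = ∫⁻ x in Ioo (0:ℝ) r, rearr μ f x := by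
  have hmp : MeasurePreserving (fun x : ℝ => -x) volume volume :=
    Measure.measurePreserving_neg volume
  have hpre : (fun x : ℝ => -x) ⁻¹' (Ioo (-r) 0) = Ioo (0:ℝ) r := by
    ext x; simp only [Set.mem_preimage, mem_Ioo]; constructor <;> (intro h; constructor <;> linarith [h.1, h.2])
  have := hmp.setLIntegral_comp_preimage (s := Ioo (-r) 0) measurableSet_Ioo (measurable_rearr μ f)
  rw [hpre] at this
  rw [← this]
  apply lintegral_congr
  intro x
  exact rearr_neg μ f x

lemma sym_split (μ : Measure ℝ) (f : ℝ → ℝ) {r : ℝ} (hr : 0 ≤ r) :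
    ∫⁻ x in Ioo (-r) r, rearr μ f x
      = (∫⁻ x in Ioo (0:ℝ) r, rearr μ f x) + ∫⁻ x in Ioo (0:ℝ) r, rearr μ f x := by
  have hset : Ioo (-r) r = Ioo (-r) 0 ∪ Ico 0 r := by
    ext x
    simp only [mem_Ioo, Set.mem_union, mem_Ico]
    constructor
    · rintro ⟨h1, h2⟩
      rcases lt_or_ge x 0 with h | h
      · exact Or.inl ⟨h1, h⟩
      · exact Or.inr ⟨h, h2⟩
    · rintro (⟨h1, h2⟩ | ⟨h1, h2⟩)
      · exact ⟨h1, h2.trans_le hr⟩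
      · constructor <;> linarith
  rw [hset, lintegral_union measurableSet_Ico (by
    apply Set.disjoint_left.mpr
    rintro x ⟨_, h2⟩ ⟨h3, _⟩
    exact absurd h3 (not_le.mpr h2))]
  rw [lint_reflect μ f r]
  congr 1
  exact setLIntegral_congr (Ioo_ae_eq_Ico).symm


lemma finite_stage (μ : Measure ℝ) (f : ℝ → ℝ) (hf : Measurable f) (hf0 : ∀ x, 0 ≤ f x)
    (hfin : ∀ t : ℝ, 0 < t → μ {x | t < f x} < ⊤)
    {L : ℝ≥0∞} (hL0 : 0 < L) (a b : ℕ → ℝ) (s : Finset ℕ)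
    (hgood : ∀ k ∈ s, L * μ (Ioo (a k) (b k)) < ∫⁻ y in Ioo (a k) (b k), ENNReal.ofReal (f y) ∂μ) :
    μ (⋃ k ∈ s, Ioo (a k) (b k)) ≤ volume {x | L < maximalE volume (rearr μ f) x} := by
  obtain ⟨t, hts, htun, hmult⟩ := selection a b s
  rcases t.eq_empty_or_nonempty with rfl | htne
  · rw [← htun]; simp
  set g : ℝ → ℝ≥0∞ := fun y => ENNReal.ofReal (f y) with hg
  have hgmeas : Measurable g := ENNReal.measurable_ofReal.comp hf
  set T1 : Set ℝ := ⋃ k ∈ t, Ioo (a k) (b k) with hT1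
  set T2 : Set ℝ := twoSet a b t with hT2
  have hgood' : ∀ k ∈ t, L * μ (Ioo (a k) (b k)) < ∫⁻ y in Ioo (a k) (b k), g y ∂μ :=
    fun k hk => hgood k (hts hk)
  have hIfin : ∀ k ∈ t, μ (Ioo (a k) (b k)) ≠ ⊤ := by
    intro k hk heq
    have h1 := hgood' k hk
    rw [heq, ENNReal.mul_top hL0.ne'] at h1
    exact absurd h1 (not_lt.mpr le_top)
  have hIpos : ∀ k ∈ t, μ (Ioo (a k) (b k)) ≠ 0 := by
    intro k hk heq
    have h1 := hgood' k hk
    rw [heq, mul_zero, setLIntegral_measure_zero _ _ heq] at h1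
    exact absurd h1 (lt_irrefl 0)
  have hT1fin : μ T1 ≠ ⊤ := by
    refine ne_top_of_le_ne_top ?_ (measure_biUnion_finset_le t _)
    exact (ENNReal.sum_lt_top.mpr (fun k hk => lt_top_iff_ne_top.mpr (hIfin k hk))).ne
  have hT2sub : T2 ⊆ T1 := twoSet_subset a b t
  have hT2fin : μ T2 ≠ ⊤ := ne_top_of_le_ne_top hT1fin (measure_mono hT2sub)
  have hT1pos : μ T1 ≠ 0 := by
    obtain ⟨k, hk⟩ := htne
    intro heq
    have hsubk : Ioo (a k) (b k) ⊆ T1 := by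
      intro y hy; rw [hT1]; exact Set.mem_biUnion hk hy
    exact hIpos k hk (le_antisymm ((measure_mono hsubk).trans heq.le) zero_le)
  have hsum1 := sum_split μ g hgmeas a b t hmult
  have hsum2 := sum_split μ (fun _ => 1) measurable_const a b t hmult
  simp only [setLIntegral_one] at hsum2
  have hstrict : L * μ T1 + L * μ T2 < (∫⁻ y in T1, g y ∂μ) + ∫⁻ y in T2, g y ∂μ := by
    calc L * μ T1 + L * μ T2 = L * (μ T1 + μ T2) := by rw [mul_add]
      _ = L * ∑ k ∈ t, μ (Ioo (a k) (b k)) := by rw [hsum2]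
      _ = ∑ k ∈ t, L * μ (Ioo (a k) (b k)) := by rw [Finset.mul_sum]
      _ < ∑ k ∈ t, ∫⁻ y in Ioo (a k) (b k), g y ∂μ := ENNReal.sum_lt_sum_of_nonempty htne hgood'
      _ = _ := hsum1
  set r1 : ℝ := (μ T1).toReal / 2 with hr1
  set r2 : ℝ := (μ T2).toReal / 2 with hr2
  have hr10 : 0 < r1 := by
    rw [hr1]
    have := ENNReal.toReal_pos hT1pos hT1fin
    linarith
  have hr20 : 0 ≤ r2 := by rw [hr2]; positivity
  have hr21 : r2 ≤ r1 := by
    rw [hr1, hr2]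
    have := ENNReal.toReal_mono hT1fin (measure_mono hT2sub)
    linarith
  have hμT1 : μ T1 = ENNReal.ofReal (2 * r1) := by
    rw [hr1, show 2 * ((μ T1).toReal / 2) = (μ T1).toReal by ring, ENNReal.ofReal_toReal hT1fin]
  have hμT2 : μ T2 = ENNReal.ofReal (2 * r2) := by
    rw [hr2, show 2 * ((μ T2).toReal / 2) = (μ T2).toReal by ring, ENNReal.ofReal_toReal hT2fin]
  have hH1 : ∫⁻ y in T1, g y ∂μ ≤ ∫⁻ x in Ioo (-r1) r1, rearr μ f x :=
    hl_ineq μ f hf hf0 hfin T1 hT1fin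
  have hH2 : ∫⁻ y in T2, g y ∂μ ≤ ∫⁻ x in Ioo (-r2) r2, rearr μ f x :=
    hl_ineq μ f hf hf0 hfin T2 hT2fin
  set S1 : ℝ≥0∞ := ∫⁻ x in Ioo (0:ℝ) r1, rearr μ f x with hS1
  set S2 : ℝ≥0∞ := ∫⁻ x in Ioo (0:ℝ) r2, rearr μ f x with hS2
  have hsym1 : ∫⁻ x in Ioo (-r1) r1, rearr μ f x = S1 + S1 := sym_split μ f hr10.le
  have hsym2 : ∫⁻ x in Ioo (-r2) r2, rearr μ f x = S2 + S2 := sym_split μ f hr20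
  set u : ℝ≥0∞ := L * ENNReal.ofReal r1 with hu
  set v : ℝ≥0∞ := L * ENNReal.ofReal r2 with hv
  have hmain : (u + v) + (u + v) < (S1 + S2) + (S1 + S2) := by
    have h1 : L * μ T1 = u + u := by
      rw [hμT1, hu, show (2:ℝ) * r1 = r1 + r1 by ring,
        ENNReal.ofReal_add hr10.le hr10.le, mul_add]
    have h2 : L * μ T2 = v + v := by
      rw [hμT2, hv, show (2:ℝ) * r2 = r2 + r2 by ring,
        ENNReal.ofReal_add hr20 hr20, mul_add]
    calc (u + v) + (u + v) = (u + u) + (v + v) := by ring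
      _ = L * μ T1 + L * μ T2 := by rw [h1, h2]
      _ < (∫⁻ y in T1, g y ∂μ) + ∫⁻ y in T2, g y ∂μ := hstrict
      _ ≤ (∫⁻ x in Ioo (-r1) r1, rearr μ f x) + ∫⁻ x in Ioo (-r2) r2, rearr μ f x :=
          add_le_add hH1 hH2
      _ = (S1 + S1) + (S2 + S2) := by rw [hsym1, hsym2]
      _ = (S1 + S2) + (S1 + S2) := by ring
  have hkey : L * ENNReal.ofReal (r1 + r2) < S1 + S2 := by
    by_contra hcon
    push_neg at hcon
    have : (S1 + S2) + (S1 + S2) ≤ (u + v) + (u + v) := by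
      have huv : u + v = L * ENNReal.ofReal (r1 + r2) := by
        rw [hu, hv, ENNReal.ofReal_add hr10.le hr20, mul_add]
      rw [huv]
      exact add_le_add hcon hcon
    exact absurd hmain (not_lt.mpr this)
  -- both asymmetric intervals have average > L
  have hJ : ∀ x, x ∈ Ioo (-r2) r1 → L < maximalE volume (rearr μ f) x := by
    intro x hx
    have hvol : volume (Ioo (-r2) r1) = ENNReal.ofReal (r1 + r2) := by
      rw [Real.volume_Ioo]; congr 1; ring
    have hvol0 : 0 < volume (Ioo (-r2) r1) := by
      rw [hvol]; exact ENNReal.ofReal_pos.mpr (by linarith)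
    have hvolfin : volume (Ioo (-r2) r1) ≠ ⊤ := by rw [hvol]; exact ENNReal.ofReal_ne_top
    have hIint : S2 + S1 ≤ ∫⁻ y in Ioo (-r2) r1, rearr μ f y := by
      have hsub : Ioo (-r2) (0:ℝ) ∪ Ioo (0:ℝ) r1 ⊆ Ioo (-r2) r1 := by
        rintro y (hy | hy) <;> exact ⟨by linarith [hy.1, hy.2], by linarith [hy.1, hy.2]⟩
      have hdisj : Disjoint (Ioo (-r2) (0:ℝ)) (Ioo (0:ℝ) r1) := by
        apply Set.disjoint_left.mpr
        rintro y ⟨_, h2⟩ ⟨h3, _⟩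
        exact absurd h3 (not_lt.mpr h2.le)
      calc S2 + S1 = (∫⁻ y in Ioo (-r2) (0:ℝ), rearr μ f y) + S1 := by
            rw [lint_reflect μ f r2]
        _ = ∫⁻ y in Ioo (-r2) (0:ℝ) ∪ Ioo (0:ℝ) r1, rearr μ f y :=
            (lintegral_union measurableSet_Ioo hdisj).symm
        _ ≤ _ := lintegral_mono_set hsub
    have hlt : L * volume (Ioo (-r2) r1) < ∫⁻ y in Ioo (-r2) r1, rearr μ f y := by
      rw [hvol]
      calc L * ENNReal.ofReal (r1 + r2) < S1 + S2 := hkey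
        _ = S2 + S1 := add_comm _ _
        _ ≤ _ := hIint
    have havg : L < (volume (Ioo (-r2) r1))⁻¹ * ∫⁻ y in Ioo (-r2) r1, rearr μ f y := by
      rw [← ENNReal.div_eq_inv_mul]
      rw [ENNReal.lt_div_iff_mul_lt (Or.inl hvol0.ne') (Or.inl hvolfin)]
      exact hlt
    refine havg.trans_le ?_
    unfold maximalE
    exact le_iSup_of_le (-r2) (le_iSup_of_le r1 (le_iSup_of_le hx (le_iSup_of_le hvol0 le_rfl)))
  have hJ' : ∀ x, x ∈ Ioo (-r1) r2 → L < maximalE volume (rearr μ f) x := by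
    intro x hx
    have hvol : volume (Ioo (-r1) r2) = ENNReal.ofReal (r1 + r2) := by
      rw [Real.volume_Ioo]; congr 1; ring
    have hvol0 : 0 < volume (Ioo (-r1) r2) := by
      rw [hvol]; exact ENNReal.ofReal_pos.mpr (by linarith)
    have hvolfin : volume (Ioo (-r1) r2) ≠ ⊤ := by rw [hvol]; exact ENNReal.ofReal_ne_top
    have hIint : S1 + S2 ≤ ∫⁻ y in Ioo (-r1) r2, rearr μ f y := by
      have hsub : Ioo (-r1) (0:ℝ) ∪ Ioo (0:ℝ) r2 ⊆ Ioo (-r1) r2 := by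
        rintro y (hy | hy) <;> exact ⟨by linarith [hy.1, hy.2], by linarith [hy.1, hy.2]⟩
      have hdisj : Disjoint (Ioo (-r1) (0:ℝ)) (Ioo (0:ℝ) r2) := by
        apply Set.disjoint_left.mpr
        rintro y ⟨_, h2⟩ ⟨h3, _⟩
        exact absurd h3 (not_lt.mpr h2.le)
      calc S1 + S2 = (∫⁻ y in Ioo (-r1) (0:ℝ), rearr μ f y) + S2 := by
            rw [lint_reflect μ f r1]
        _ = ∫⁻ y in Ioo (-r1) (0:ℝ) ∪ Ioo (0:ℝ) r2, rearr μ f y :=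
            (lintegral_union measurableSet_Ioo hdisj).symm
        _ ≤ _ := lintegral_mono_set hsub
    have hlt : L * volume (Ioo (-r1) r2) < ∫⁻ y in Ioo (-r1) r2, rearr μ f y := by
      rw [hvol]
      exact hkey.trans_le hIint
    have havg : L < (volume (Ioo (-r1) r2))⁻¹ * ∫⁻ y in Ioo (-r1) r2, rearr μ f y := by
      rw [← ENNReal.div_eq_inv_mul]
      rw [ENNReal.lt_div_iff_mul_lt (Or.inl hvol0.ne') (Or.inl hvolfin)]
      exact hlt
    refine havg.trans_le ?_
    unfold maximalE
    exact le_iSup_of_le (-r1) (le_iSup_of_le r2 (le_iSup_of_le hx (le_iSup_of_le hvol0 le_rfl)))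
  have hcover : Ioo (-r1) r1 \ {0} ⊆ {x | L < maximalE volume (rearr μ f) x} := by
    rintro x ⟨hx, hx0⟩
    simp only [Set.mem_singleton_iff] at hx0
    rcases lt_or_gt_of_ne hx0 with h | h
    · exact hJ' x ⟨hx.1, h.trans_le hr20⟩
    · exact hJ x ⟨lt_of_le_of_lt (by linarith) h, hx.2⟩
  calc μ (⋃ k ∈ s, Ioo (a k) (b k)) = μ T1 := congrArg μ htun.symm
    _ = volume (Ioo (-r1) r1) := by
        rw [Real.volume_Ioo, hμT1]; congr 1; ring
    _ = volume (Ioo (-r1) r1 \ {0}) := (measure_diff_null (measure_singleton 0)).symm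
    _ ≤ _ := measure_mono hcover

end AuxStmt1

/-- `μ({M_μ f > λ}) ≤ Leb({M(f*) > λ})` for every `λ > 0`. -/
theorem stmt_1 (μ : Measure ℝ) (f : ℝ → ℝ) (hf : Measurable f)
    (hf0 : ∀ x, 0 ≤ f x)
    (hfin : ∀ t : ℝ, 0 < t → μ {x | t < f x} < ⊤) :
    ∀ l : ℝ, 0 < l →
      μ {x | ENNReal.ofReal l < maximal μ f x} ≤
        volume {x | ENNReal.ofReal l < maximalE volume (rearr μ f) x} := by
  intro l hl
  set L : ℝ≥0∞ := ENNReal.ofReal l with hLdef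
  have hL0 : 0 < L := ENNReal.ofReal_pos.mpr hl
  have hLfin : L ≠ ⊤ := ENNReal.ofReal_ne_top
  set E : Set ℝ := {x | L < maximal μ f x} with hE
  have habs : (fun y => ENNReal.ofReal |f y|) = fun y => ENNReal.ofReal (f y) :=
    funext fun y => by rw [abs_of_nonneg (hf0 y)]
  -- every point of E has a good interval around it
  have hwit : ∀ x : E, ∃ p : ℝ × ℝ, (x : ℝ) ∈ Ioo p.1 p.2 ∧
      L * μ (Ioo p.1 p.2) < ∫⁻ y in Ioo p.1 p.2, ENNReal.ofReal (f y) ∂μ := by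
    rintro ⟨x, hx⟩
    simp only [hE, mem_setOf_eq, maximal, maximalE, lt_iSup_iff, habs] at hx
    obtain ⟨c, d, hmem, hpos, hlt⟩ := hx
    refine ⟨(c, d), hmem, ?_⟩
    have hfin' : μ (Ioo c d) ≠ ⊤ := by
      intro heq
      rw [heq, ENNReal.inv_top, zero_mul] at hlt
      exact absurd hlt (not_lt.mpr zero_le)
    have := ENNReal.mul_lt_mul_left hpos.ne' hfin' hlt
    calc L * μ (Ioo c d) < ((μ (Ioo c d))⁻¹ * ∫⁻ y in Ioo c d, ENNReal.ofReal (f y) ∂μ)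
          * μ (Ioo c d) := this
      _ = (∫⁻ y in Ioo c d, ENNReal.ofReal (f y) ∂μ) * ((μ (Ioo c d))⁻¹ * μ (Ioo c d)) := by
          ring
      _ = ∫⁻ y in Ioo c d, ENNReal.ofReal (f y) ∂μ := by
          rw [ENNReal.inv_mul_cancel hpos.ne' hfin', mul_one]
  choose p hp1 hp2 using hwit
  have hcover : E ⊆ ⋃ x : E, Ioo (p x).1 (p x).2 := by
    intro x hx
    exact Set.mem_iUnion.mpr ⟨⟨x, hx⟩, hp1 ⟨x, hx⟩⟩
  obtain ⟨T, hTc, hTun⟩ := TopologicalSpace.isOpen_iUnion_countable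
    (fun x : E => Ioo (p x).1 (p x).2) (fun _ => isOpen_Ioo)
  rcases T.eq_empty_or_nonempty with rfl | hTne
  · simp only [Set.biUnion_empty] at hTun
    have : E ⊆ (∅ : Set ℝ) := by
      intro x hx
      rw [hTun]
      exact hcover hx
    calc μ E = 0 := measure_mono_null this measure_empty
      _ ≤ _ := zero_le
  obtain ⟨e, he⟩ := hTc.exists_eq_range hTne
  set A : ℕ → ℝ := fun n => (p (e n)).1 with hA
  set B : ℕ → ℝ := fun n => (p (e n)).2 with hB
  have hEsub : E ⊆ ⋃ n : ℕ, Ioo (A n) (B n) := by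
    intro x hx
    have := hcover hx
    rw [← hTun] at this
    rw [Set.mem_iUnion₂] at this
    obtain ⟨i, hi, hxi⟩ := this
    rw [he] at hi
    obtain ⟨n, rfl⟩ := hi
    exact Set.mem_iUnion.mpr ⟨n, hxi⟩
  calc μ E ≤ μ (⋃ n : ℕ, Ioo (A n) (B n)) := measure_mono hEsub
    _ = ⨆ n : ℕ, μ (Set.accumulate (fun n => Ioo (A n) (B n)) n) :=
        measure_iUnion_eq_iSup_accumulate
    _ ≤ volume {x | L < maximalE volume (rearr μ f) x} := by
        apply iSup_le
        intro n
        have hacc : Set.accumulate (fun n => Ioo (A n) (B n)) n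
            = ⋃ k ∈ Finset.range (n+1), Ioo (A k) (B k) := by
          ext y
          simp only [Set.mem_accumulate, Set.mem_iUnion, Finset.mem_range, exists_prop,
            Nat.lt_succ_iff]
        rw [hacc]
        exact finite_stage μ f hf hf0 hfin hL0 A B (Finset.range (n+1))
          (fun k _ => hp2 (e k))
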